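/- arXiv:1304.3177 — 9 statements merged into one kernel-verified Lean document; each statement's English description precedes it below -/
import Mathlib

section
/- For any PE-CFG G, parsing expression p, and strings x, y over T: if G[p] xy ⤳CFG y, then for every string y' over T, G[p] xy' ⤳CFG y'. -/
/-- Parsing expressions over non-terminals `V` and terminals `T`. -/
inductive PExp (V T : Type) : Type where
  | eps : PExp V T
  | term : T → PExp V T
  | var : V → PExp V T
  | cat : PExp V T → PExp V T → PExp V T
  | alt : PExp V T → PExp V T → PExp V T

/-- The relation `G[p] v ⤳CFG w`, where the PE-CFG is given by its production
function `P` (the initial expression is the first explicit argument). -/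
inductive CFGMatch {V T : Type} (P : V → PExp V T) : PExp V T → List T → List T → Prop where
  | empty (x : List T) : CFGMatch P .eps x x
  | term (a : T) (x : List T) : CFGMatch P (.term a) (a :: x) x
  | var {A : V} {v w : List T} : CFGMatch P (P A) v w → CFGMatch P (.var A) v w
  | cat {p₁ p₂ : PExp V T} {v u w : List T} :
      CFGMatch P p₁ v u → CFGMatch P p₂ u w → CFGMatch P (.cat p₁ p₂) v w
  | altL {p₁ p₂ : PExp V T} {v w : List T} :
      CFGMatch P p₁ v w → CFGMatch P (.alt p₁ p₂) v w
  | altR {p₁ p₂ : PExp V T} {v w : List T} :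
      CFGMatch P p₂ v w → CFGMatch P (.alt p₁ p₂) v w

/-- Result of a PEG match: either the remaining suffix of the input, or failure. -/
inductive Res (T : Type) : Type where
  | str : List T → Res T
  | fail : Res T

/-- The relation `G[p] x ⤳PEG X` (ordered choice, explicit failure). -/
inductive PEGMatch {V T : Type} (P : V → PExp V T) : PExp V T → List T → Res T → Prop where
  | empty (x : List T) : PEGMatch P .eps x (.str x)
  | termS (a : T) (x : List T) : PEGMatch P (.term a) (a :: x) (.str x)
  | termF {b a : T} (x : List T) : b ≠ a → PEGMatch P (.term b) (a :: x) .fail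
  | termE (a : T) : PEGMatch P (.term a) [] .fail
  | var {A : V} {x : List T} {r : Res T} : PEGMatch P (P A) x r → PEGMatch P (.var A) x r
  | catS {p₁ p₂ : PExp V T} {v u : List T} {r : Res T} :
      PEGMatch P p₁ v (.str u) → PEGMatch P p₂ u r → PEGMatch P (.cat p₁ p₂) v r
  | catF {p₁ p₂ : PExp V T} {v : List T} :
      PEGMatch P p₁ v .fail → PEGMatch P (.cat p₁ p₂) v .fail
  | ordS {p₁ p₂ : PExp V T} {v w : List T} :
      PEGMatch P p₁ v (.str w) → PEGMatch P (.alt p₁ p₂) v (.str w)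
  | ordB {p₁ p₂ : PExp V T} {v w : List T} :
      PEGMatch P p₁ v .fail → PEGMatch P p₂ v (.str w) → PEGMatch P (.alt p₁ p₂) v (.str w)
  | ordF {p₁ p₂ : PExp V T} {v : List T} :
      PEGMatch P p₁ v .fail → PEGMatch P p₂ v .fail → PEGMatch P (.alt p₁ p₂) v .fail

/-- `Subterm q p`: the expression `q` is a subexpression of `p`. -/
inductive Subterm {V T : Type} : PExp V T → PExp V T → Prop where
  | refl (p : PExp V T) : Subterm p p
  | catL {q p₁ p₂ : PExp V T} : Subterm q p₁ → Subterm q (.cat p₁ p₂)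
  | catR {q p₁ p₂ : PExp V T} : Subterm q p₂ → Subterm q (.cat p₁ p₂)
  | altL {q p₁ p₂ : PExp V T} : Subterm q p₁ → Subterm q (.alt p₁ p₂)
  | altR {q p₁ p₂ : PExp V T} : Subterm q p₂ → Subterm q (.alt p₁ p₂)

/-- `q` occurs in the grammar `(P, pS)`: it is a subexpression of the initial
expression `pS` or of some production `P A`. -/
def OccursIn {V T : Type} (P : V → PExp V T) (pS : PExp V T) (q : PExp V T) : Prop :=
  Subterm q pS ∨ ∃ A : V, Subterm q (P A)

theorem CFGMatch.prefix {V T : Type} {P : V → PExp V T} {p : PExp V T} {v w : List T}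
    (h : CFGMatch P p v w) : ∃ d, v = d ++ w := by
  induction h with
  | empty x => exact ⟨[], rfl⟩
  | term a x => exact ⟨[a], rfl⟩
  | var _ ih => exact ih
  | cat _ _ ih1 ih2 =>
    obtain ⟨d1, rfl⟩ := ih1; obtain ⟨d2, rfl⟩ := ih2
    exact ⟨d1 ++ d2, (List.append_assoc _ _ _).symm⟩
  | altL _ ih => exact ih
  | altR _ ih => exact ih

theorem CFGMatch.replace {V T : Type} {P : V → PExp V T} {p : PExp V T} {v w : List T}
    (h : CFGMatch P p v w) : ∀ x, v = x ++ w → ∀ y', CFGMatch P p (x ++ y') y' := by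
  induction h with
  | empty z =>
    intro x hx y'
    have : x = [] := by simpa using congrArg List.length hx
    subst this; exact .empty y'
  | term a z =>
    intro x hx y'
    have hl : x.length = 1 := by
      have := congrArg List.length hx; simp at this; omega
    obtain ⟨b, rfl⟩ := List.length_eq_one_iff.mp hl
    have : a = b := by simpa using congrArg (·.head?) hx
    subst this; exact .term a y'
  | var _ ih => exact fun x hx y' => .var (ih x hx y')
  | cat h1 h2 ih1 ih2 =>
    intro x hx y'
    obtain ⟨d1, rfl⟩ := h1.prefix
    obtain ⟨d2, rfl⟩ := h2.prefix
    have hx' : x = d1 ++ d2 := by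
      rw [← List.append_assoc] at hx
      exact (List.append_cancel_right hx).symm
    subst hx'
    have h1' := ih1 d1 rfl (d2 ++ y')
    rw [← List.append_assoc] at h1'
    exact .cat h1' (ih2 d2 rfl y')
  | altL _ ih => exact fun x hx y' => .altL (ih x hx y')
  | altR _ ih => exact fun x hx y' => .altR (ih x hx y')

/-- If `G[p] xy ⤳CFG y` then for every `y'`, `G[p] xy' ⤳CFG y'`. -/
theorem stmt_0 {V T : Type} [Fintype V] [Fintype T]
    (P : V → PExp V T) (pS : PExp V T) (p : PExp V T) (x y : List T)
    (h : CFGMatch P p (x ++ y) y) :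
    ∀ y' : List T, CFGMatch P p (x ++ y') y' := by
  exact fun y' => h.replace x rfl y'
end

section
/- For any PE-CFG G and string x over T: there exists a string y with G xy ⤳CFG y if and only if G x ⤳CFG ε. Consequently, the language { x | ∃y, G xy ⤳CFG y } equals { x | G x ⤳CFG ε }. -/
lemma CFGMatch.append {V T : Type} {P : V → PExp V T} {p : PExp V T} {v w : List T}
    (h : CFGMatch P p v w) (z : List T) : CFGMatch P p (v ++ z) (w ++ z) := by
  induction h with
  | empty x => exact .empty _
  | term a x => exact .term a _
  | var _ ih => exact .var ih
  | cat _ _ ih₁ ih₂ => exact .cat ih₁ ih₂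
  | altL _ ih => exact .altL ih
  | altR _ ih => exact .altR ih

lemma CFGMatch.suffix {V T : Type} {P : V → PExp V T} {p : PExp V T} {v w : List T}
    (h : CFGMatch P p v w) : ∃ u, v = u ++ w := by
  induction h with
  | empty x => exact ⟨[], rfl⟩
  | term a x => exact ⟨[a], rfl⟩
  | var _ ih => exact ih
  | cat _ _ ih₁ ih₂ =>
    obtain ⟨a, rfl⟩ := ih₁; obtain ⟨b, rfl⟩ := ih₂
    exact ⟨a ++ b, by simp⟩
  | altL _ ih => exact ih
  | altR _ ih => exact ih

lemma CFGMatch.shrink {V T : Type} {P : V → PExp V T} {p : PExp V T} {v w : List T}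
    (h : CFGMatch P p v w) : ∀ x, v = x ++ w → CFGMatch P p x [] := by
  induction h with
  | empty w =>
    rintro x hx
    obtain rfl : x = [] := by simpa using congrArg List.length hx
    exact .empty []
  | term a w =>
    rintro x hx
    obtain rfl : x = [a] := by
      have hl : x.length = 1 := by
        have := congrArg List.length hx; simp at this; omega
      obtain ⟨c, rfl⟩ := List.length_eq_one_iff.mp hl
      simpa using hx.symm
    exact .term a []
  | var _ ih => exact fun x hx => .var (ih x hx)
  | @cat p₁ p₂ v u w h₁ h₂ ih₁ ih₂ =>
    rintro x hx
    obtain ⟨b, rfl⟩ := h₂.suffix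
    obtain ⟨a, rfl⟩ := h₁.suffix
    obtain rfl : x = a ++ b := by
      rw [← List.append_assoc] at hx
      exact ((List.append_left_injective w).eq_iff.mp hx).symm
    have := (ih₁ a rfl).append b
    exact .cat (by simpa using this) (ih₂ b rfl)
  | altL _ ih => exact fun x hx => .altL (ih x hx)
  | altR _ ih => exact fun x hx => .altR (ih x hx)

/-- `∃ y, G xy ⤳CFG y` iff `G x ⤳CFG ε`; consequently the two
definitions of the language of `G` coincide. -/
theorem stmt_1 {V T : Type} [Fintype V] [Fintype T]
    (P : V → PExp V T) (pS : PExp V T) :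
    (∀ x : List T, (∃ y : List T, CFGMatch P pS (x ++ y) y) ↔ CFGMatch P pS x []) ∧
    {x : List T | ∃ y : List T, CFGMatch P pS (x ++ y) y} =
      {x : List T | CFGMatch P pS x []} := by
  have key : ∀ x : List T, (∃ y : List T, CFGMatch P pS (x ++ y) y) ↔ CFGMatch P pS x [] := by
    intro x
    constructor
    · rintro ⟨y, hy⟩; exact hy.shrink x rfl
    · intro h; exact ⟨[], by simpa using h.append []⟩
  exact ⟨key, Set.ext fun x => key x⟩
end

section
/- Let G be a traditional CFG without useless symbols and let G' = T(G) be its corresponding PE-CFG. For every string α over V ∪ T (read as a parsing expression via right-associated concatenation of its symbols, ε if α is empty), every string x of terminals, and every string y of terminals: α ⇒*_G x if and only if G'[α] xy ⤳CFG y. -/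
/-- Read a symbol (terminal or non-terminal) as a parsing expression. -/
def symToExp {V T : Type} : Symbol T V → PExp V T
  | .terminal a => .term a
  | .nonterminal A => .var A

/-- Read a string of symbols as the right-associated concatenation of its
symbols (`ε` if the string is empty). -/
def strToExp {V T : Type} : List (Symbol T V) → PExp V T
  | [] => .eps
  | [s] => symToExp s
  | s :: rest => .cat (symToExp s) (strToExp rest)

/-- Combine a list of parsing expressions into a right-associated choice
(`ε` for the empty list). -/
def choiceOf {V T : Type} : List (PExp V T) → PExp V T
  | [] => .eps
  | [p] => p
  | p :: rest => .alt p (choiceOf rest)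

/-- The production function of the PE-CFG `T(G)`: each non-terminal is mapped to
the right-associated choice of the right-hand sides of its productions,
enumerated (in some fixed order) by `prods`. -/
def transP {T : Type} (G : ContextFreeGrammar T)
    (prods : G.NT → List (List (Symbol T G.NT))) : G.NT → PExp G.NT T :=
  fun A => choiceOf ((prods A).map strToExp)

section Stmt2Aux

variable {T : Type}

lemma strToExp_cons' {V : Type} (s : Symbol T V) (l : List (Symbol T V)) (h : l ≠ []) :
    strToExp (s :: l) = PExp.cat (symToExp s) (strToExp l) := by
  cases l with
  | nil => exact absurd rfl h
  | cons t r => rfl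

lemma cfgMatch_eps {V : Type} {P : V → PExp V T} {v w : List T}
    (h : CFGMatch P .eps v w) : v = w := by cases h; rfl

lemma match_cons {V : Type} (P : V → PExp V T) (s : Symbol T V) (l : List (Symbol T V))
    (v w : List T) :
    CFGMatch P (strToExp (s :: l)) v w ↔
      ∃ u, CFGMatch P (symToExp s) v u ∧ CFGMatch P (strToExp l) u w := by
  cases l with
  | nil =>
    show CFGMatch P (symToExp s) v w ↔ ∃ u, CFGMatch P (symToExp s) v u ∧ CFGMatch P PExp.eps u w
    constructor
    · intro h; exact ⟨w, h, CFGMatch.empty w⟩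
    · rintro ⟨u, h1, h2⟩; rw [cfgMatch_eps h2] at h1; exact h1
  | cons t r =>
    rw [strToExp_cons' s (t :: r) (by simp)]
    constructor
    · intro h; cases h with | cat h1 h2 => exact ⟨_, h1, h2⟩
    · rintro ⟨u, h1, h2⟩; exact CFGMatch.cat h1 h2

lemma match_append {V : Type} (P : V → PExp V T) (γ δ : List (Symbol T V)) (v w : List T) :
    CFGMatch P (strToExp (γ ++ δ)) v w ↔
      ∃ u, CFGMatch P (strToExp γ) v u ∧ CFGMatch P (strToExp δ) u w := by
  induction γ generalizing v with
  | nil =>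
    show CFGMatch P (strToExp δ) v w ↔ ∃ u, CFGMatch P PExp.eps v u ∧ CFGMatch P (strToExp δ) u w
    constructor
    · intro h; exact ⟨v, CFGMatch.empty v, h⟩
    · rintro ⟨u, h1, h2⟩; rw [cfgMatch_eps h1]; exact h2
  | cons s γ' ih =>
    rw [List.cons_append]
    simp only [match_cons]
    constructor
    · rintro ⟨u, h1, h2⟩
      obtain ⟨u', h3, h4⟩ := (ih u).mp h2
      exact ⟨u', ⟨u, h1, h3⟩, h4⟩
    · rintro ⟨u', ⟨u, h1, h3⟩, h4⟩
      exact ⟨u, h1, (ih u).mpr ⟨u', h3, h4⟩⟩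

lemma choiceOf_mem {V : Type} (P : V → PExp V T) {p : PExp V T} {l : List (PExp V T)}
    (hp : p ∈ l) {v w : List T} (h : CFGMatch P p v w) : CFGMatch P (choiceOf l) v w := by
  induction l with
  | nil => cases hp
  | cons q r ih =>
    cases r with
    | nil => rw [List.mem_singleton] at hp; subst hp; exact h
    | cons q' r' =>
      rcases List.mem_cons.mp hp with rfl | hp'
      · exact CFGMatch.altL h
      · exact CFGMatch.altR (ih hp')

/-- The strings of terminals generated by a parsing expression, reading
non-terminals via CFG derivations. -/
inductive Gen (G : ContextFreeGrammar T) : PExp G.NT T → List T → Prop where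
  | eps : Gen G .eps []
  | term (a : T) : Gen G (.term a) [a]
  | var {A : G.NT} {x : List T} :
      G.Derives [Symbol.nonterminal A] (x.map Symbol.terminal) → Gen G (.var A) x
  | cat {p q : PExp G.NT T} {x y : List T} :
      Gen G p x → Gen G q y → Gen G (.cat p q) (x ++ y)
  | altL {p q : PExp G.NT T} {x : List T} : Gen G p x → Gen G (.alt p q) x
  | altR {p q : PExp G.NT T} {x : List T} : Gen G q x → Gen G (.alt p q) x

variable {G : ContextFreeGrammar T}

lemma gen_sym_derives {s : Symbol T G.NT} {x : List T} (h : Gen G (symToExp s) x) :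
    G.Derives [s] (x.map Symbol.terminal) := by
  cases s with
  | terminal a => cases h; exact Relation.ReflTransGen.refl
  | nonterminal A => cases h with | var h => exact h

lemma gen_str_derives (β : List (Symbol T G.NT)) :
    ∀ x : List T, Gen G (strToExp β) x → G.Derives β (x.map Symbol.terminal) := by
  induction β with
  | nil => intro x h; cases h; exact Relation.ReflTransGen.refl
  | cons s l ih =>
    intro x h
    cases l with
    | nil => exact gen_sym_derives h
    | cons t r =>
      rw [strToExp_cons' s (t :: r) (by simp)] at h
      cases h with
      | cat h1 h2 =>
        rename_i x1 x2
        have d1 := gen_sym_derives h1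
        have d2 := ih _ h2
        rw [List.map_append]
        exact Relation.ReflTransGen.trans (d1.append_right (t :: r))
          (d2.append_left (x1.map Symbol.terminal))

lemma gen_choiceOf {l : List (PExp G.NT T)} {x : List T}
    (h : Gen G (choiceOf l) x) (hl : l ≠ []) : ∃ p ∈ l, Gen G p x := by
  induction l with
  | nil => exact absurd rfl hl
  | cons q r ih =>
    cases r with
    | nil => exact ⟨q, by simp, h⟩
    | cons q' r' =>
      cases h with
      | altL h => exact ⟨q, by simp, h⟩
      | altR h =>
        obtain ⟨p, hp, hg⟩ := ih h (by simp)
        exact ⟨p, by simp [hp], hg⟩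

lemma prods_ne_nil {prods : G.NT → List (List (Symbol T G.NT))}
    (hprods : ∀ (A : G.NT) (β : List (Symbol T G.NT)),
      (ContextFreeRule.mk A β) ∈ G.rules ↔ β ∈ prods A)
    (hproductive : ∀ A : G.NT,
      ∃ x : List T, G.Derives [Symbol.nonterminal A] (x.map Symbol.terminal))
    (A : G.NT) : prods A ≠ [] := by
  intro hA
  obtain ⟨x, hx⟩ := hproductive A
  rcases hx.eq_or_head with heq | ⟨u, hstep, -⟩
  · cases x with
    | nil => simp at heq
    | cons a r => simp at heq
  · obtain ⟨r, hr, hrw⟩ := hstep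
    obtain ⟨p, q, hpq, -⟩ := hrw.exists_parts
    have hlen := congrArg List.length hpq
    simp at hlen
    have hp : p = [] := List.eq_nil_of_length_eq_zero (by omega)
    have hq : q = [] := List.eq_nil_of_length_eq_zero (by omega)
    subst hp hq
    simp at hpq
    have hmem : r.output ∈ prods A := by
      have : (ContextFreeRule.mk A r.output) ∈ G.rules := by
        obtain ⟨i, o⟩ := r
        simp only at hpq
        subst hpq
        exact hr
      exact (hprods A r.output).mp this
    rw [hA] at hmem
    cases hmem

lemma match_gen {prods : G.NT → List (List (Symbol T G.NT))}
    (hprods : ∀ (A : G.NT) (β : List (Symbol T G.NT)),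
      (ContextFreeRule.mk A β) ∈ G.rules ↔ β ∈ prods A)
    (hproductive : ∀ A : G.NT,
      ∃ x : List T, G.Derives [Symbol.nonterminal A] (x.map Symbol.terminal))
    {p : PExp G.NT T} {v w : List T} (h : CFGMatch (transP G prods) p v w) :
    ∃ x, v = x ++ w ∧ Gen G p x := by
  induction h with
  | empty x => exact ⟨[], rfl, Gen.eps⟩
  | term a x => exact ⟨[a], rfl, Gen.term a⟩
  | @var A v w h ih =>
    obtain ⟨x, rfl, hg⟩ := ih
    refine ⟨x, rfl, Gen.var ?_⟩
    obtain ⟨pe, hpe, hgp⟩ := gen_choiceOf hg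
      (by simpa using prods_ne_nil hprods hproductive A)
    obtain ⟨β, hβ, rfl⟩ := List.mem_map.mp hpe
    have hd := gen_str_derives β x hgp
    have hpr : G.Produces [Symbol.nonterminal A] β :=
      ⟨ContextFreeRule.mk A β, (hprods A β).mpr hβ, ContextFreeRule.Rewrites.input_output⟩
    exact hpr.trans_derives hd
  | cat h1 h2 ih1 ih2 =>
    obtain ⟨x1, rfl, g1⟩ := ih1
    obtain ⟨x2, he, g2⟩ := ih2
    exact ⟨x1 ++ x2, by rw [he, List.append_assoc], Gen.cat g1 g2⟩
  | altL h ih => obtain ⟨x, rfl, g⟩ := ih; exact ⟨x, rfl, Gen.altL g⟩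
  | altR h ih => obtain ⟨x, rfl, g⟩ := ih; exact ⟨x, rfl, Gen.altR g⟩

lemma terminal_match (P : G.NT → PExp G.NT T) (x y : List T) :
    CFGMatch P (strToExp (x.map Symbol.terminal)) (x ++ y) y := by
  induction x with
  | nil => exact CFGMatch.empty y
  | cons a x' ih =>
    rw [List.map_cons]
    exact (match_cons P _ _ _ _).mpr ⟨x' ++ y, CFGMatch.term a (x' ++ y), ih⟩

lemma match_of_derives {prods : G.NT → List (List (Symbol T G.NT))}
    (hprods : ∀ (A : G.NT) (β : List (Symbol T G.NT)),
      (ContextFreeRule.mk A β) ∈ G.rules ↔ β ∈ prods A)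
    (α : List (Symbol T G.NT)) (x : List T)
    (h : G.Derives α (x.map Symbol.terminal)) (y : List T) :
    CFGMatch (transP G prods) (strToExp α) (x ++ y) y := by
  induction h using Relation.ReflTransGen.head_induction_on with
  | refl => exact terminal_match _ x y
  | head hstep _ ih =>
    obtain ⟨r, hr, hrw⟩ := hstep
    obtain ⟨p, q, hpq, hout⟩ := hrw.exists_parts
    rw [hout, List.append_assoc] at ih
    obtain ⟨u1, h1, h2⟩ := (match_append _ _ _ _ _).mp ih
    obtain ⟨u2, h3, h4⟩ := (match_append _ _ _ _ _).mp h2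
    have hmem : strToExp r.output ∈ (prods r.input).map strToExp := by
      refine List.mem_map_of_mem (f := strToExp) ((hprods r.input r.output).mp ?_)
      obtain ⟨i, o⟩ := r
      exact hr
    have hv : CFGMatch (transP G prods) (PExp.var r.input) u1 u2 :=
      CFGMatch.var (choiceOf_mem _ hmem h3)
    rw [hpq, List.append_assoc]
    refine (match_append _ _ _ _ _).mpr ⟨u1, h1, ?_⟩
    exact (match_append _ _ _ _ _).mpr ⟨u2, hv, h4⟩

end Stmt2Aux

/-- for a traditional CFG `G` without useless symbols and its
corresponding PE-CFG `T(G)`, `α ⇒*_G x` iff `T(G)[α] xy ⤳CFG y`. -/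
theorem stmt_2 {T : Type} [Fintype T] (G : ContextFreeGrammar T) [Fintype G.NT]
    (prods : G.NT → List (List (Symbol T G.NT)))
    (hprods : ∀ (A : G.NT) (β : List (Symbol T G.NT)),
      (ContextFreeRule.mk A β) ∈ G.rules ↔ β ∈ prods A)
    (hproductive : ∀ A : G.NT,
      ∃ x : List T, G.Derives [Symbol.nonterminal A] (x.map Symbol.terminal))
    (hreachable : ∀ A : G.NT, ∃ α β : List (Symbol T G.NT),
      G.Derives [Symbol.nonterminal G.initial] (α ++ [Symbol.nonterminal A] ++ β))
    (α : List (Symbol T G.NT)) (x y : List T) :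
    G.Derives α (x.map Symbol.terminal) ↔
      CFGMatch (transP G prods) (strToExp α) (x ++ y) y := by
  constructor
  · intro h
    exact match_of_derives hprods α x h y
  · intro h
    obtain ⟨x', he, hg⟩ := match_gen hprods hproductive h
    have hx : x' = x := List.append_cancel_right he.symm
    rw [← hx]
    exact gen_str_derives α x' hg
end

section
/- Let G be a traditional CFG without useless symbols with initial non-terminal S. Then the language of G, { x over T | S ⇒*_G x }, equals the language of the PE-CFG T(G), { x over T | ∃y, T(G) xy ⤳CFG y }. -/
section AuxLemmas

variable {V T : Type}

lemma strToExp_cons_match_iff {P : V → PExp V T} (s : Symbol T V) (rest : List (Symbol T V))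
    {v w : List T} :
    CFGMatch P (strToExp (s :: rest)) v w ↔
      ∃ u, CFGMatch P (symToExp s) v u ∧ CFGMatch P (strToExp rest) u w := by
  cases rest with
  | nil =>
    simp only [strToExp]
    constructor
    · intro h; exact ⟨w, h, .empty w⟩
    · rintro ⟨u, h1, h2⟩; cases h2; exact h1
  | cons t r =>
    simp only [strToExp]
    constructor
    · intro h; cases h with | cat h1 h2 => exact ⟨_, h1, h2⟩
    · rintro ⟨u, h1, h2⟩; exact .cat h1 h2

lemma match_strToExp_append {P : V → PExp V T} {α β : List (Symbol T V)} {v u w : List T}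
    (h1 : CFGMatch P (strToExp α) v u) (h2 : CFGMatch P (strToExp β) u w) :
    CFGMatch P (strToExp (α ++ β)) v w := by
  induction α generalizing v with
  | nil =>
    simp only [strToExp] at h1
    cases h1; simpa using h2
  | cons s rest ih =>
    rw [List.cons_append, strToExp_cons_match_iff]
    rw [strToExp_cons_match_iff] at h1
    obtain ⟨u', hs, hrest⟩ := h1
    exact ⟨u', hs, ih hrest⟩

lemma match_strToExp_append_decomp {P : V → PExp V T} {α β : List (Symbol T V)} {v w : List T}
    (h : CFGMatch P (strToExp (α ++ β)) v w) :
    ∃ u, CFGMatch P (strToExp α) v u ∧ CFGMatch P (strToExp β) u w := by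
  induction α generalizing v with
  | nil => exact ⟨v, .empty v, by simpa using h⟩
  | cons s rest ih =>
    rw [List.cons_append, strToExp_cons_match_iff] at h
    obtain ⟨u', hs, hr⟩ := h
    obtain ⟨u, h1, h2⟩ := ih hr
    exact ⟨u, (strToExp_cons_match_iff s rest).2 ⟨u', hs, h1⟩, h2⟩

lemma match_terminal_string {P : V → PExp V T} (x y : List T) :
    CFGMatch P (strToExp (x.map Symbol.terminal)) (x ++ y) y := by
  induction x with
  | nil => exact .empty y
  | cons a r ih =>
    rw [List.map_cons, strToExp_cons_match_iff]
    exact ⟨r ++ y, .term a _, ih⟩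

lemma match_choiceOf {P : V → PExp V T} :
    ∀ {l : List (PExp V T)} {p : PExp V T}, p ∈ l →
      ∀ {v w : List T}, CFGMatch P p v w → CFGMatch P (choiceOf l) v w
  | [], p, hp, _, _, _ => absurd hp List.not_mem_nil
  | [q], p, hp, v, w, h => by rcases List.mem_singleton.mp hp with rfl; exact h
  | q :: q2 :: r2, p, hp, v, w, h => by
    rcases List.mem_cons.mp hp with rfl | hp
    · exact .altL h
    · exact .altR (match_choiceOf hp h)

/-- The intended language semantics of a parsing expression over `G`. -/
def Lang {T : Type} (G : ContextFreeGrammar T) : PExp G.NT T → List T → Prop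
  | .eps, u => u = []
  | .term a, u => u = [a]
  | .var A, u => G.Derives [Symbol.nonterminal A] (u.map Symbol.terminal)
  | .cat p q, u => ∃ u1 u2, u = u1 ++ u2 ∧ Lang G p u1 ∧ Lang G q u2
  | .alt p q, u => Lang G p u ∨ Lang G q u

lemma lang_choiceOf {G : ContextFreeGrammar T} :
    ∀ {l : List (PExp G.NT T)} {u : List T}, l ≠ [] → Lang G (choiceOf l) u →
      ∃ p ∈ l, Lang G p u
  | [], _, hne, _ => absurd rfl hne
  | [q], u, _, h => ⟨q, List.mem_singleton_self q, h⟩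
  | q :: q2 :: r2, u, _, h => by
    rcases h with h | h
    · exact ⟨q, List.mem_cons_self, h⟩
    · obtain ⟨p, hp, hl⟩ := lang_choiceOf (List.cons_ne_nil q2 r2) h
      exact ⟨p, List.mem_cons_of_mem q hp, hl⟩

lemma lang_symToExp {G : ContextFreeGrammar T} (s : Symbol T G.NT) (u : List T)
    (h : Lang G (symToExp s) u) : G.Derives [s] (u.map Symbol.terminal) := by
  cases s with
  | terminal a =>
    have : u = [a] := h
    subst this; rfl
  | nonterminal A => exact h

lemma lang_strToExp {G : ContextFreeGrammar T} :
    ∀ (β : List (Symbol T G.NT)) (u : List T), Lang G (strToExp β) u →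
      G.Derives β (u.map Symbol.terminal)
  | [], u, h => by
    have : u = [] := h
    subst this; rfl
  | [s], u, h => lang_symToExp s u h
  | s :: t :: r, u, h => by
    obtain ⟨u1, u2, rfl, h1, h2⟩ := h
    have d1 := lang_symToExp s u1 h1
    have d2 := lang_strToExp (t :: r) u2 h2
    rw [List.map_append]
    exact (d1.append_right (t :: r)).trans (d2.append_left (u1.map Symbol.terminal))

lemma match_sound {G : ContextFreeGrammar T}
    {prods : G.NT → List (List (Symbol T G.NT))}
    (hprods : ∀ (A : G.NT) (β : List (Symbol T G.NT)),
      (ContextFreeRule.mk A β) ∈ G.rules ↔ β ∈ prods A)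
    (hne : ∀ A, prods A ≠ [])
    {p : PExp G.NT T} {v w : List T} (h : CFGMatch (transP G prods) p v w) :
    ∃ u, v = u ++ w ∧ Lang G p u := by
  induction h with
  | empty x => exact ⟨[], rfl, rfl⟩
  | term a x => exact ⟨[a], rfl, rfl⟩
  | @var A v w _ ih =>
    obtain ⟨u, rfl, hl⟩ := ih
    refine ⟨u, rfl, ?_⟩
    have hmapne : ((prods A).map strToExp) ≠ [] := by
      simp [hne A]
    obtain ⟨q, hqmem, hq⟩ := lang_choiceOf hmapne hl
    obtain ⟨γ, hγ, rfl⟩ := List.mem_map.mp hqmem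
    have hr : (ContextFreeRule.mk A γ) ∈ G.rules := (hprods A γ).2 hγ
    have hprod : G.Produces [Symbol.nonterminal A] γ :=
      ⟨_, hr, ContextFreeRule.Rewrites.input_output⟩
    exact hprod.trans_derives (lang_strToExp γ u hq)
  | cat h1 h2 ih1 ih2 =>
    obtain ⟨u1, rfl, l1⟩ := ih1
    obtain ⟨u2, rfl, l2⟩ := ih2
    exact ⟨u1 ++ u2, (List.append_assoc u1 u2 _).symm, u1, u2, rfl, l1, l2⟩
  | altL _ ih => obtain ⟨u, rfl, l⟩ := ih; exact ⟨u, rfl, Or.inl l⟩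
  | altR _ ih => obtain ⟨u, rfl, l⟩ := ih; exact ⟨u, rfl, Or.inr l⟩

lemma match_complete {G : ContextFreeGrammar T}
    {prods : G.NT → List (List (Symbol T G.NT))}
    (hprods : ∀ (A : G.NT) (β : List (Symbol T G.NT)),
      (ContextFreeRule.mk A β) ∈ G.rules ↔ β ∈ prods A)
    {β : List (Symbol T G.NT)} {x : List T}
    (h : G.Derives β (x.map Symbol.terminal)) (y : List T) :
    CFGMatch (transP G prods) (strToExp β) (x ++ y) y := by
  induction h using Relation.ReflTransGen.head_induction_on with
  | refl => exact match_terminal_string x y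
  | head hprod _ ih =>
    obtain ⟨r, hrmem, hrw⟩ := hprod
    obtain ⟨p, q, rfl, rfl⟩ := hrw.exists_parts
    rw [List.append_assoc] at ih
    obtain ⟨u1, hp, hrest⟩ := match_strToExp_append_decomp ih
    obtain ⟨u2, hout, hq⟩ := match_strToExp_append_decomp hrest
    have hro : r.output ∈ prods r.input := (hprods r.input r.output).1 hrmem
    have hvar : CFGMatch (transP G prods) (.var r.input) u1 u2 :=
      .var (match_choiceOf (List.mem_map_of_mem (f := strToExp) hro) hout)
    have hmid : CFGMatch (transP G prods) (strToExp [Symbol.nonterminal r.input]) u1 u2 := hvar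
    exact match_strToExp_append (match_strToExp_append hp hmid) hq

end AuxLemmas

/-- the language of a traditional CFG `G` without useless symbols
equals the language of the PE-CFG `T(G)` (whose initial expression is the
initial non-terminal of `G`). -/
theorem stmt_3 {T : Type} [Fintype T] (G : ContextFreeGrammar T) [Fintype G.NT]
    (prods : G.NT → List (List (Symbol T G.NT)))
    (hprods : ∀ (A : G.NT) (β : List (Symbol T G.NT)),
      (ContextFreeRule.mk A β) ∈ G.rules ↔ β ∈ prods A)
    (hproductive : ∀ A : G.NT,
      ∃ x : List T, G.Derives [Symbol.nonterminal A] (x.map Symbol.terminal))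
    (hreachable : ∀ A : G.NT, ∃ α β : List (Symbol T G.NT),
      G.Derives [Symbol.nonterminal G.initial] (α ++ [Symbol.nonterminal A] ++ β)) :
    {x : List T | G.Derives [Symbol.nonterminal G.initial] (x.map Symbol.terminal)} =
      {x : List T | ∃ y : List T,
        CFGMatch (transP G prods) (.var G.initial) (x ++ y) y} := by
  have hne : ∀ A, prods A ≠ [] := by
    intro A hA
    obtain ⟨z, hz⟩ := hproductive A
    rcases hz.eq_or_head with heq | ⟨c, ⟨r, hrmem, hrw⟩, _⟩
    · cases z <;> simp at heq
    · obtain ⟨p, q, hpq, _⟩ := hrw.exists_parts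
      have hin : r.input = A ∧ p = [] ∧ q = [] := by
        cases p with
        | nil => simpa [eq_comm] using hpq
        | cons a p => simp at hpq
      have : r.output ∈ prods A := by
        have := (hprods r.input r.output).1 hrmem
        rwa [hin.1] at this
      rw [hA] at this
      exact List.not_mem_nil this
  ext x
  simp only [Set.mem_setOf_eq]
  constructor
  · intro h
    refine ⟨[], ?_⟩
    have := match_complete hprods (β := [Symbol.nonterminal G.initial]) h []
    exact this
  · rintro ⟨y, hm⟩
    obtain ⟨u, heq, hl⟩ := match_sound hprods hne hm
    have hux : u = x := by
      have := List.append_cancel_right heq.symm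
      exact this
    rw [hux] at hl
    exact hl
end

section
/- Under the relation ⤳CFG, for any PE-CFG G, parsing expressions p₁, p₂, p₃, and strings v, w over T: (commutativity) G[p₁|p₂] v ⤳CFG w iff G[p₂|p₁] v ⤳CFG w; (associativity) G[(p₁|p₂)|p₃] v ⤳CFG w iff G[p₁|(p₂|p₃)] v ⤳CFG w; (idempotence) G[p₁|p₁] v ⤳CFG w iff G[p₁] v ⤳CFG w; (left distributivity) G[p₁(p₂|p₃)] v ⤳CFG w iff G[(p₁p₂)|(p₁p₃)] v ⤳CFG w; (right distributivity) G[(p₁|p₂)p₃] v ⤳CFG w iff G[(p₁p₃)|(p₂p₃)] v ⤳CFG w. -/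
/-- algebraic properties of choice and concatenation under `⤳CFG`:
commutativity, associativity and idempotence of choice, and distributivity of
concatenation over choice on both sides. -/
theorem stmt_4 {V T : Type} [Fintype V] [Fintype T]
    (P : V → PExp V T) (p₁ p₂ p₃ : PExp V T) (v w : List T) :
    (CFGMatch P (.alt p₁ p₂) v w ↔ CFGMatch P (.alt p₂ p₁) v w) ∧
    (CFGMatch P (.alt (.alt p₁ p₂) p₃) v w ↔ CFGMatch P (.alt p₁ (.alt p₂ p₃)) v w) ∧
    (CFGMatch P (.alt p₁ p₁) v w ↔ CFGMatch P p₁ v w) ∧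
    (CFGMatch P (.cat p₁ (.alt p₂ p₃)) v w ↔
      CFGMatch P (.alt (.cat p₁ p₂) (.cat p₁ p₃)) v w) ∧
    (CFGMatch P (.cat (.alt p₁ p₂) p₃) v w ↔
      CFGMatch P (.alt (.cat p₁ p₃) (.cat p₂ p₃)) v w) := by
  refine ⟨⟨?_,?_⟩,⟨?_,?_⟩,⟨?_,?_⟩,⟨?_,?_⟩,⟨?_,?_⟩⟩ <;> intro h
  · cases h with
    | altL h => exact .altR h
    | altR h => exact .altL h
  · cases h with
    | altL h => exact .altR h
    | altR h => exact .altL h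
  · cases h with
    | altL h => cases h with
      | altL h => exact .altL h
      | altR h => exact .altR (.altL h)
    | altR h => exact .altR (.altR h)
  · cases h with
    | altL h => exact .altL (.altL h)
    | altR h => cases h with
      | altL h => exact .altL (.altR h)
      | altR h => exact .altR h
  · cases h with
    | altL h => exact h
    | altR h => exact h
  · exact .altL h
  · cases h with
    | cat h1 h2 => cases h2 with
      | altL h2 => exact .altL (.cat h1 h2)
      | altR h2 => exact .altR (.cat h1 h2)
  · cases h with
    | altL h => cases h with | cat h1 h2 => exact .cat h1 (.altL h2)
    | altR h => cases h with | cat h1 h2 => exact .cat h1 (.altR h2)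
  · cases h with
    | cat h1 h2 => cases h1 with
      | altL h1 => exact .altL (.cat h1 h2)
      | altR h1 => exact .altR (.cat h1 h2)
  · cases h with
    | altL h => cases h with | cat h1 h2 => exact .cat (.altL h1) h2
    | altR h => cases h with | cat h1 h2 => exact .cat (.altR h1) h2
end

section
/- For any PE-CFG G, parsing expression p, and strings x, y over T: if G[p] xy ⤳PEG y then G[p] xy ⤳CFG y. -/
/-- if `G[p] xy ⤳PEG y` then `G[p] xy ⤳CFG y`. -/
theorem stmt_5 {V T : Type} [Fintype V] [Fintype T]
    (P : V → PExp V T) (p : PExp V T) (x y : List T)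
    (h : PEGMatch P p (x ++ y) (.str y)) :
    CFGMatch P p (x ++ y) y := by
  suffices H : ∀ {q : PExp V T} {v : List T} {r : Res T}, PEGMatch P q v r →
      ∀ w, r = .str w → CFGMatch P q v w from H h y rfl
  intro q v r hm
  induction hm with
  | empty x => intro w hw; cases hw; exact .empty _
  | termS a x => intro w hw; cases hw; exact CFGMatch.term _ _
  | termF x h => intro w hw; cases hw
  | termE a => intro w hw; cases hw
  | var _ ih => intro w hw; exact .var (ih w hw)
  | catS _ _ ih1 ih2 => intro w hw; exact .cat (ih1 _ rfl) (ih2 w hw)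
  | catF _ _ => intro w hw; cases hw
  | ordS _ ih => intro w hw; exact .altL (ih w hw)
  | ordB _ _ _ ih2 => intro w hw; exact .altR (ih2 w hw)
  | ordF _ _ _ _ => intro w hw; cases hw
end

section
/- For any PE-CFG G, parsing expression p, string x over T, and results X, X' (each either a string over T or fail): if G[p] x ⤳PEG X and G[p] x ⤳PEG X' then X = X'; moreover, any two derivation trees for G[p] x ⤳PEG X are equal (the derivation is unique). -/
/-- Derivation trees for the relation `⤳PEG`: the inductive type of derivations
built from the inference rules of `⤳PEG`. -/
inductive PEGDeriv {V T : Type} (P : V → PExp V T) : PExp V T → List T → Res T → Type where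
  | empty (x : List T) : PEGDeriv P .eps x (.str x)
  | termS (a : T) (x : List T) : PEGDeriv P (.term a) (a :: x) (.str x)
  | termF {b a : T} (x : List T) : b ≠ a → PEGDeriv P (.term b) (a :: x) .fail
  | termE (a : T) : PEGDeriv P (.term a) [] .fail
  | var (A : V) {x : List T} {r : Res T} : PEGDeriv P (P A) x r → PEGDeriv P (.var A) x r
  | catS {p₁ p₂ : PExp V T} {v u : List T} {r : Res T} :
      PEGDeriv P p₁ v (.str u) → PEGDeriv P p₂ u r → PEGDeriv P (.cat p₁ p₂) v r
  | catF {p₁ : PExp V T} (p₂ : PExp V T) {v : List T} :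
      PEGDeriv P p₁ v .fail → PEGDeriv P (.cat p₁ p₂) v .fail
  | ordS {p₁ : PExp V T} (p₂ : PExp V T) {v w : List T} :
      PEGDeriv P p₁ v (.str w) → PEGDeriv P (.alt p₁ p₂) v (.str w)
  | ordB {p₁ p₂ : PExp V T} {v w : List T} :
      PEGDeriv P p₁ v .fail → PEGDeriv P p₂ v (.str w) → PEGDeriv P (.alt p₁ p₂) v (.str w)
  | ordF {p₁ p₂ : PExp V T} {v : List T} :
      PEGDeriv P p₁ v .fail → PEGDeriv P p₂ v .fail → PEGDeriv P (.alt p₁ p₂) v .fail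

theorem pegDet {V T : Type} {P : V → PExp V T} {p : PExp V T} {x : List T} {X X' : Res T}
    (h : PEGMatch P p x X) (h' : PEGMatch P p x X') : X = X' := by
  induction h generalizing X' with
  | empty x => cases h' with
    | empty => rfl
  | termS a x => cases h' with
    | termS => rfl
    | termF _ hne => exact absurd rfl hne
  | termF x hne => cases h' with
    | termS => exact absurd rfl hne
    | termF => rfl
  | termE a => cases h' with
    | termE => rfl
  | var _ ih => cases h' with
    | var h'' => exact ih h''
  | catS h1 h2 ih1 ih2 => cases h' with
    | catS h1' h2' => cases ih1 h1'; exact ih2 h2'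
    | catF h1' => cases ih1 h1'
  | catF h1 ih1 => cases h' with
    | catS h1' h2' => cases ih1 h1'
    | catF => rfl
  | ordS h1 ih1 => cases h' with
    | ordS h1' => exact ih1 h1'
    | ordB h1' _ => cases ih1 h1'
    | ordF h1' _ => cases ih1 h1'
  | ordB h1 h2 ih1 ih2 => cases h' with
    | ordS h1' => cases ih1 h1'
    | ordB _ h2' => exact ih2 h2'
    | ordF _ h2' => cases ih2 h2'
  | ordF h1 h2 ih1 ih2 => cases h' with
    | ordS h1' => cases ih1 h1'
    | ordB _ h2' => cases ih2 h2'
    | ordF => rfl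

def PEGDeriv.toMatch {V T : Type} {P : V → PExp V T} {p : PExp V T} {x : List T} {X : Res T} :
    PEGDeriv P p x X → PEGMatch P p x X
  | .empty x => .empty x
  | .termS a x => .termS a x
  | .termF x hne => .termF x hne
  | .termE a => .termE a
  | .var _ d => .var d.toMatch
  | .catS d1 d2 => .catS d1.toMatch d2.toMatch
  | .catF _ d1 => .catF d1.toMatch
  | .ordS _ d1 => .ordS d1.toMatch
  | .ordB d1 d2 => .ordB d1.toMatch d2.toMatch
  | .ordF d1 d2 => .ordF d1.toMatch d2.toMatch

theorem pegDerivUnique {V T : Type} {P : V → PExp V T} {p : PExp V T} {x : List T} {X : Res T}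
    (e e' : PEGDeriv P p x X) : e = e' := by
  induction e with
  | empty x => cases e'; rfl
  | termS a x => cases e' with
    | termS => rfl
  | termF x hne => cases e' with
    | termF => rfl
  | termE a => cases e'; rfl
  | var A d ih => cases e' with
    | var _ d' => rw [ih d']
  | catS d1 d2 ih1 ih2 => cases e' with
    | catS d1' d2' =>
        cases pegDet d1.toMatch d1'.toMatch
        rw [ih1 d1', ih2 d2']
    | catF _ d1' => cases pegDet d1.toMatch d1'.toMatch
  | catF p₂ d1 ih1 => cases e' with
    | catS d1' d2' => cases pegDet d1.toMatch d1'.toMatch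
    | catF _ d1' => rw [ih1 d1']
  | ordS p₂ d1 ih1 => cases e' with
    | ordS _ d1' => rw [ih1 d1']
    | ordB d1' _ => cases pegDet d1.toMatch d1'.toMatch
  | ordB d1 d2 ih1 ih2 => cases e' with
    | ordS _ d1' => cases pegDet d1.toMatch d1'.toMatch
    | ordB d1' d2' => rw [ih1 d1', ih2 d2']
  | ordF d1 d2 ih1 ih2 => cases e' with
    | ordF d1' d2' => rw [ih1 d1', ih2 d2']

/-- the result of `G[p] x` under `⤳PEG` is unique, and the
derivation tree for `G[p] x ⤳PEG X` is unique. -/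
theorem stmt_6 {V T : Type} [Fintype V] [Fintype T]
    (P : V → PExp V T) (p : PExp V T) (x : List T) (X X' : Res T)
    (h : PEGMatch P p x X) (h' : PEGMatch P p x X') :
    X = X' ∧ ∀ e e' : PEGDeriv P p x X, e = e' := by
  exact ⟨pegDet h h', fun e e' => pegDerivUnique e e'⟩
end

section
/- Let G be a complete LL(1) PE-CFG with BNF structure over terminal alphabet T, and let $ ∉ T be a fresh end-of-input marker. Then for every string x over T: G x$ ⤳CFG $ if and only if G x$ ⤳PEG $. Hence G has the same language (of $-terminated inputs) whether interpreted as a CFG or as a PEG. -/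
/-- Derivation trees for the relation `⤳CFG`: the inductive type of derivations
built from the inference rules of `⤳CFG`. -/
inductive CDeriv {V T : Type} (P : V → PExp V T) : PExp V T → List T → List T → Type where
  | empty (x : List T) : CDeriv P .eps x x
  | term (a : T) (x : List T) : CDeriv P (.term a) (a :: x) x
  | var (A : V) {v w : List T} : CDeriv P (P A) v w → CDeriv P (.var A) v w
  | cat {p₁ p₂ : PExp V T} {v u w : List T} :
      CDeriv P p₁ v u → CDeriv P p₂ u w → CDeriv P (.cat p₁ p₂) v w
  | altL {p₁ : PExp V T} (p₂ : PExp V T) {v w : List T} :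
      CDeriv P p₁ v w → CDeriv P (.alt p₁ p₂) v w
  | altR (p₁ : PExp V T) {p₂ : PExp V T} {v w : List T} :
      CDeriv P p₂ v w → CDeriv P (.alt p₁ p₂) v w

/-- `InTree P d J`: the judgment `J = (q, v, w)` (read `G[q] v ⤳CFG w`) occurs
in the derivation tree `d`, i.e. it is the conclusion of one of its subtrees. -/
inductive InTree {V T : Type} (P : V → PExp V T) :
    ∀ {p : PExp V T} {v w : List T}, CDeriv P p v w → PExp V T × List T × List T → Prop where
  | here {p : PExp V T} {v w : List T} (d : CDeriv P p v w) : InTree P d (p, v, w)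
  | var {A : V} {v w : List T} {d : CDeriv P (P A) v w} {J} :
      InTree P d J → InTree P (.var A d) J
  | catL {p₁ p₂ : PExp V T} {v u w : List T}
      {d₁ : CDeriv P p₁ v u} {d₂ : CDeriv P p₂ u w} {J} :
      InTree P d₁ J → InTree P (.cat d₁ d₂) J
  | catR {p₁ p₂ : PExp V T} {v u w : List T}
      {d₁ : CDeriv P p₁ v u} {d₂ : CDeriv P p₂ u w} {J} :
      InTree P d₂ J → InTree P (.cat d₁ d₂) J
  | altL {p₁ p₂ : PExp V T} {v w : List T} {d : CDeriv P p₁ v w} {J} :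
      InTree P d J → InTree P (.altL p₂ d) J
  | altR {p₁ p₂ : PExp V T} {v w : List T} {d : CDeriv P p₂ v w} {J} :
      InTree P d J → InTree P (.altR p₁ d) J

/-- `G[p]` matches the empty string. -/
def Nullable {V T : Type} (P : V → PExp V T) (p : PExp V T) : Prop :=
  ∃ w : List T, CFGMatch P p w w

/-- No choice expression occurs in `p`. -/
def ChoiceFree {V T : Type} (p : PExp V T) : Prop :=
  ∀ q₁ q₂ : PExp V T, ¬ Subterm (.alt q₁ q₂) p

/-- The grammar `(P, pS)` has BNF structure: no choice occurs inside a
concatenation, the initial expression is a single non-terminal, and in every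
choice occurring in the grammar, if the first alternative matches the empty
string then so does the second. -/
def BNFStructure {V T : Type} (P : V → PExp V T) (pS : PExp V T) : Prop :=
  (∀ p₁ p₂ : PExp V T, OccursIn P pS (.cat p₁ p₂) → ChoiceFree p₁ ∧ ChoiceFree p₂) ∧
  (∃ A : V, pS = .var A) ∧
  (∀ p₁ p₂ : PExp V T, OccursIn P pS (.alt p₁ p₂) → Nullable P p₁ → Nullable P p₂)

/-! Terminal alphabet `T` extended with a fresh end-of-input marker `$`,
modelled as `Option T` with `none` playing the role of `$`. -/

/-- The terminal part of `FIRST^G(p)`: terminals `a ∈ T` (not the marker) that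
can start a string matched by `G[p]`. -/
def FIRSTt {V T : Type} (P : V → PExp V (Option T)) (p : PExp V (Option T)) :
    Set (Option T) :=
  {a : Option T | (∃ t : T, a = some t) ∧
    ∃ v y : List (Option T), CFGMatch P p (a :: (v ++ y)) y}

/-- `FOLLOW^G(A)`: symbols `a ∈ T ∪ {$}` such that the judgment
`G[A] yaz ⤳CFG az` occurs in some derivation tree for `G w$ ⤳CFG $`. -/
def FOLLOW {V T : Type} (P : V → PExp V (Option T)) (pS : PExp V (Option T)) (A : V) :
    Set (Option T) :=
  {a : Option T | ∃ (w : List T) (y z : List (Option T))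
    (d : CDeriv P pS (w.map some ++ [none]) [none]),
    InTree P d (.var A, y ++ a :: z, a :: z)}

/-- The grammar `(P, pS)` (with BNF structure, possibly with `ε` expressions)
is LL(1): for every production `A → p` and every choice `p₁|p₂` occurring in
`p`, (1) `FIRST(p₁) ∩ FIRST(p₂) = ∅` (in particular at most one alternative is
nullable), and (2) if `ε ∈ FIRST(p₂)` then `FIRST(p₁) ∩ FOLLOW(A) = ∅`. -/
def IsLL1Eps {V T : Type} (P : V → PExp V (Option T)) (pS : PExp V (Option T)) : Prop :=
  ∀ (A : V) (p₁ p₂ : PExp V (Option T)), Subterm (.alt p₁ p₂) (P A) →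
    (FIRSTt P p₁ ∩ FIRSTt P p₂ = ∅ ∧ ¬ (Nullable P p₁ ∧ Nullable P p₂)) ∧
    (Nullable P p₂ → FIRSTt P p₁ ∩ FOLLOW P pS A = ∅)

/-- The grammar `(P, pS)` is complete: every expression occurring in it either
succeeds or fails (as a PEG) on every input. -/
def CompleteG {V T : Type} (P : V → PExp V T) (pS : PExp V T) : Prop :=
  ∀ p : PExp V T, OccursIn P pS p → ∀ x : List T,
    (∃ x' : List T, PEGMatch P p x (.str x')) ∨ PEGMatch P p x .fail

/-! ### Auxiliary lemmas -/

theorem subterm_trans {V T : Type} {a b c : PExp V T} (h2 : Subterm b c) :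
    Subterm a b → Subterm a c := by
  induction h2 with
  | refl => exact id
  | catL _ ih => exact fun h => .catL (ih h)
  | catR _ ih => exact fun h => .catR (ih h)
  | altL _ ih => exact fun h => .altL (ih h)
  | altR _ ih => exact fun h => .altR (ih h)

theorem occursIn_subterm {V T : Type} {P : V → PExp V T} {pS p q : PExp V T}
    (hp : OccursIn P pS p) (hq : Subterm q p) : OccursIn P pS q := by
  rcases hp with h | ⟨A, h⟩
  · exact Or.inl (subterm_trans h hq)
  · exact Or.inr ⟨A, subterm_trans h hq⟩

theorem cderiv_cfg {V T : Type} {P : V → PExp V T} {p : PExp V T} {v u : List T}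
    (d : CDeriv P p v u) : CFGMatch P p v u := by
  induction d with
  | empty x => exact .empty x
  | term a x => exact .term a x
  | var A _ ih => exact .var ih
  | cat _ _ ih₁ ih₂ => exact .cat ih₁ ih₂
  | altL _ _ ih => exact .altL ih
  | altR _ _ ih => exact .altR ih

theorem cfg_nonempty_deriv {V T : Type} {P : V → PExp V T} {p : PExp V T} {v u : List T}
    (h : CFGMatch P p v u) : Nonempty (CDeriv P p v u) := by
  induction h with
  | empty x => exact ⟨.empty x⟩
  | term a x => exact ⟨.term a x⟩
  | @var A _ _ _ ih => exact ⟨.var A ih.some⟩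
  | cat _ _ ih₁ ih₂ => exact ⟨.cat ih₁.some ih₂.some⟩
  | @altL _ p₂ _ _ _ ih => exact ⟨.altL p₂ ih.some⟩
  | @altR p₁ _ _ _ _ ih => exact ⟨.altR p₁ ih.some⟩

theorem peg_cfg {V T : Type} {P : V → PExp V T} {p : PExp V T} {v : List T} {r : Res T}
    (h : PEGMatch P p v r) : ∀ u : List T, r = .str u → CFGMatch P p v u := by
  induction h with
  | empty x => intro u h; cases h; exact .empty x
  | termS a x => intro u h; cases h; exact .term a x
  | termF x _ => intro u h; cases h
  | termE a => intro u h; cases h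
  | var _ ih => intro u h; exact .var (ih u h)
  | catS _ _ ih₁ ih₂ => intro u h; exact .cat (ih₁ _ rfl) (ih₂ u h)
  | catF _ _ => intro u h; cases h
  | ordS _ ih => intro u h; exact .altL (ih u h)
  | ordB _ _ _ ih₂ => intro u h; exact .altR (ih₂ u h)
  | ordF _ _ _ _ => intro u h; cases h

theorem cfg_suffix {V T : Type} {P : V → PExp V T} {p : PExp V T} {v u : List T}
    (h : CFGMatch P p v u) : ∃ c : List T, v = c ++ u := by
  induction h with
  | empty x => exact ⟨[], rfl⟩
  | term a x => exact ⟨[a], rfl⟩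
  | var _ ih => exact ih
  | cat _ _ ih₁ ih₂ =>
      obtain ⟨c₁, rfl⟩ := ih₁; obtain ⟨c₂, rfl⟩ := ih₂
      exact ⟨c₁ ++ c₂, by rw [List.append_assoc]⟩
  | altL _ ih => exact ih
  | altR _ ih => exact ih

theorem cfg_consume_some {V T : Type} {P : V → PExp V (Option T)} {pS : PExp V (Option T)}
    (hND : ¬ OccursIn P pS (.term (none : Option T)))
    {p : PExp V (Option T)} {v u : List (Option T)} (h : CFGMatch P p v u) :
    OccursIn P pS p → ∃ c : List (Option T), v = c ++ u ∧ (none : Option T) ∉ c := by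
  induction h with
  | empty x => exact fun _ => ⟨[], rfl, by simp⟩
  | term a x =>
      intro hp
      refine ⟨[a], rfl, ?_⟩
      intro hmem
      rw [List.mem_singleton] at hmem
      subst hmem
      exact hND hp
  | @var A _ _ _ ih => exact fun _ => ih (Or.inr ⟨A, .refl _⟩)
  | cat _ _ ih₁ ih₂ =>
      intro hp
      obtain ⟨c₁, rfl, hc₁⟩ := ih₁ (occursIn_subterm hp (.catL (.refl _)))
      obtain ⟨c₂, rfl, hc₂⟩ := ih₂ (occursIn_subterm hp (.catR (.refl _)))
      refine ⟨c₁ ++ c₂, by rw [List.append_assoc], ?_⟩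
      intro hmem
      rcases List.mem_append.mp hmem with h | h
      · exact hc₁ h
      · exact hc₂ h
  | altL _ ih => exact fun hp => ih (occursIn_subterm hp (.altL (.refl _)))
  | altR _ ih => exact fun hp => ih (occursIn_subterm hp (.altR (.refl _)))

theorem first_of_consume {V T : Type} {P : V → PExp V (Option T)} {pS : PExp V (Option T)}
    (hND : ¬ OccursIn P pS (.term (none : Option T)))
    {p : PExp V (Option T)} {v u : List (Option T)}
    (h : CFGMatch P p v u) (hp : OccursIn P pS p) (hne : v ≠ u) :
    ∃ (t : T) (z : List (Option T)), v = some t :: (z ++ u) ∧ some t ∈ FIRSTt P p := by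
  obtain ⟨c, rfl, hc⟩ := cfg_consume_some hND h hp
  cases c with
  | nil => exact absurd rfl hne
  | cons a c' =>
      cases a with
      | none => exact absurd List.mem_cons_self hc
      | some t => exact ⟨t, c', rfl, ⟨t, rfl⟩, c', u, h⟩

/-- `SubD P d e`: the derivation `d` is a subtree of `e`. -/
inductive SubD {V T : Type} (P : V → PExp V T) :
    ∀ {p v u p' v' u' : _}, CDeriv P p v u → CDeriv P p' v' u' → Prop where
  | refl {p v u} (d : CDeriv P p v u) : SubD P d d
  | var {p v u} {d : CDeriv P p v u} {A v' w'} {e : CDeriv P (P A) v' w'} :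
      SubD P d e → SubD P d (.var A e)
  | catL {p v u p₁ p₂ v' m w'} {d : CDeriv P p v u}
      {e₁ : CDeriv P p₁ v' m} {e₂ : CDeriv P p₂ m w'} :
      SubD P d e₁ → SubD P d (.cat e₁ e₂)
  | catR {p v u p₁ p₂ v' m w'} {d : CDeriv P p v u}
      {e₁ : CDeriv P p₁ v' m} {e₂ : CDeriv P p₂ m w'} :
      SubD P d e₂ → SubD P d (.cat e₁ e₂)
  | altL {p v u p₁ v' w'} {d : CDeriv P p v u} (p₂ : PExp V T) {e : CDeriv P p₁ v' w'} :
      SubD P d e → SubD P d (.altL p₂ e)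
  | altR {p v u p₂ v' w'} {d : CDeriv P p v u} (p₁ : PExp V T) {e : CDeriv P p₂ v' w'} :
      SubD P d e → SubD P d (.altR p₁ e)

theorem subD_trans {V T : Type} {P : V → PExp V T}
    {p v u p' v' u' p'' v'' u'' : _} {d : CDeriv P p v u} {e : CDeriv P p' v' u'}
    {f : CDeriv P p'' v'' u''} (h2 : SubD P e f) : SubD P d e → SubD P d f := by
  induction h2 with
  | refl => exact id
  | var _ ih => exact fun h => .var (ih h)
  | catL _ ih => exact fun h => .catL (ih h)
  | catR _ ih => exact fun h => .catR (ih h)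
  | altL _ _ ih => exact fun h => .altL _ (ih h)
  | altR _ _ ih => exact fun h => .altR _ (ih h)

theorem subD_inTree {V T : Type} {P : V → PExp V T}
    {p v u p' v' u' : _} {d : CDeriv P p v u} {e : CDeriv P p' v' u'}
    (h : SubD P d e) : InTree P e (p, v, u) := by
  induction h with
  | refl d => exact .here d
  | var _ ih => exact .var ih
  | catL _ ih => exact .catL ih
  | catR _ ih => exact .catR ih
  | altL _ _ ih => exact .altL ih
  | altR _ _ ih => exact .altR ih

theorem main_cfg_to_peg {V T : Type}
    {P : V → PExp V (Option T)} {pS : PExp V (Option T)}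
    (hNoDollar : ¬ OccursIn P pS (.term (none : Option T)))
    (hbnf : BNFStructure P pS) (hll1 : IsLL1Eps P pS) (hcomplete : CompleteG P pS)
    {w : List T} (d0 : CDeriv P pS (w.map some ++ [none]) [none]) :
    ∀ {p : PExp V (Option T)} {v u : List (Option T)} (d : CDeriv P p v u),
      SubD P d d0 → OccursIn P pS p →
      (∀ q₁ q₂ : PExp V (Option T), Subterm (.alt q₁ q₂) p →
        ∃ A : V, Subterm (.alt q₁ q₂) (P A) ∧
          ∃ y : List (Option T), InTree P d0 (.var A, y ++ u, u)) →
      PEGMatch P p v (.str u) := by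
  intro p v u d
  induction d with
  | empty x => exact fun _ _ _ => .empty x
  | term a x => exact fun _ _ _ => .termS a x
  | var A d ih =>
      intro hsub hocc halt
      refine .var (ih (subD_trans hsub (.var (.refl d))) (Or.inr ⟨A, .refl _⟩) ?_)
      intro q₁ q₂ hq
      refine ⟨A, hq, ?_⟩
      have hin := subD_inTree hsub
      obtain ⟨y, hy⟩ := cfg_suffix (cderiv_cfg d)
      exact ⟨y, hy ▸ hin⟩
  | cat d₁ d₂ ih₁ ih₂ =>
      intro hsub hocc halt
      have hcf := hbnf.1 _ _ hocc
      exact .catS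
        (ih₁ (subD_trans hsub (.catL (.refl _)))
          (occursIn_subterm hocc (.catL (.refl _)))
          (fun q₁ q₂ hq => absurd hq (hcf.1 q₁ q₂)))
        (ih₂ (subD_trans hsub (.catR (.refl _)))
          (occursIn_subterm hocc (.catR (.refl _)))
          (fun q₁ q₂ hq => absurd hq (hcf.2 q₁ q₂)))
  | altL p₂ d ih =>
      intro hsub hocc halt
      exact .ordS (ih (subD_trans hsub (.altL _ (.refl _)))
        (occursIn_subterm hocc (.altL (.refl _)))
        (fun q₁ q₂ hq => halt q₁ q₂ (.altL hq)))
  | @altR p₁ p₂ v u d ih =>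
      intro hsub hocc halt
      have h2 : PEGMatch P _ _ (.str _) := ih (subD_trans hsub (.altR _ (.refl _)))
        (occursIn_subterm hocc (.altR (.refl _)))
        (fun q₁ q₂ hq => halt q₁ q₂ (.altR hq))
      obtain ⟨A, hA, y, hin⟩ := halt _ _ (.refl _)
      have hoccA : OccursIn P pS (.alt _ _) := Or.inr ⟨A, hA⟩
      have hocc1 := occursIn_subterm hoccA (.altL (.refl _))
      obtain ⟨⟨hdisj, hnb⟩, hfol⟩ := hll1 A _ _ hA
      rcases hcomplete _ hocc1 v with ⟨u', hpeg1⟩ | hfail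
      · exfalso
        have hcfg1 := peg_cfg hpeg1 u' rfl
        by_cases hvu' : v = u'
        · exact hnb ⟨⟨u', hvu' ▸ hcfg1⟩, hbnf.2.2 _ _ hoccA ⟨u', hvu' ▸ hcfg1⟩⟩
        · obtain ⟨t, z, hv, hfirst⟩ := first_of_consume hNoDollar hcfg1 hocc1 hvu'
          by_cases hvu : v = u
          · -- the second alternative matched the empty string: use FOLLOW
            have hn2 : Nullable P _ := ⟨_, hvu ▸ cderiv_cfg d⟩
            have hu : _ = some t :: (z ++ u') := hvu ▸ hv
            have hfolmem : some t ∈ FOLLOW P pS A := ⟨w, y, z ++ u', d0, hu ▸ hin⟩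
            exact Set.eq_empty_iff_forall_notMem.mp (hfol hn2) (some t) ⟨hfirst, hfolmem⟩
          · obtain ⟨t₂, z₂, hv₂, hfirst₂⟩ := first_of_consume hNoDollar (cderiv_cfg d)
              (occursIn_subterm hoccA (.altR (.refl _))) hvu
            have ht : some t = some t₂ := by
              rw [hv] at hv₂
              exact (List.cons.injEq _ _ _ _ ▸ hv₂).1
            exact Set.eq_empty_iff_forall_notMem.mp hdisj (some t) ⟨hfirst, ht ▸ hfirst₂⟩
      · exact .ordB hfail h2

/-- a complete LL(1) PE-CFG `G` with BNF structure over terminal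
alphabet `T` (the fresh marker `$ = none` does not occur in `G`) satisfies
`G x$ ⤳CFG $` iff `G x$ ⤳PEG $`, hence it has the same language of
`$`-terminated inputs as a CFG and as a PEG. -/
theorem stmt_9 {V T : Type} [Fintype V] [Fintype T]
    (P : V → PExp V (Option T)) (pS : PExp V (Option T))
    (hNoDollar : ¬ OccursIn P pS (.term (none : Option T)))
    (hbnf : BNFStructure P pS) (hll1 : IsLL1Eps P pS) (hcomplete : CompleteG P pS) :
    (∀ x : List T,
      CFGMatch P pS (x.map some ++ [none]) [none] ↔
        PEGMatch P pS (x.map some ++ [none]) (.str [none])) ∧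
    {x : List T | CFGMatch P pS (x.map some ++ [none]) [none]} =
      {x : List T | PEGMatch P pS (x.map some ++ [none]) (.str [none])} := by
  obtain ⟨A₀, hA₀⟩ := hbnf.2.1
  have fwd : ∀ x : List T, CFGMatch P pS (x.map some ++ [none]) [none] →
      PEGMatch P pS (x.map some ++ [none]) (.str [none]) := by
    intro x hcfg
    obtain ⟨d0⟩ := cfg_nonempty_deriv hcfg
    refine main_cfg_to_peg hNoDollar hbnf hll1 hcomplete d0 d0 (.refl d0)
      (Or.inl (.refl _)) ?_
    intro q₁ q₂ hq
    rw [hA₀] at hq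
    cases hq
  refine ⟨fun x => ⟨fwd x, fun h => peg_cfg h _ rfl⟩, ?_⟩
  ext x
  exact ⟨fwd x, fun h => peg_cfg h _ rfl⟩
end

section
/- Let G be a PEG (a PE-CFG whose expressions may contain not-predicates) and p a parsing expression, and let G' and p' be the PE-CFG and expression obtained from G and p by erasing all predicates. For all strings x, y over T: if G[p] xy ⤳PEG y then G'[p'] xy ⤳CFG y. -/
/-- Parsing expressions with the *not* syntactic predicate (PEG expressions). -/
inductive PExpN (V T : Type) : Type where
  | eps : PExpN V T
  | term : T → PExpN V T
  | var : V → PExpN V T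
  | cat : PExpN V T → PExpN V T → PExpN V T
  | alt : PExpN V T → PExpN V T → PExpN V T
  | not : PExpN V T → PExpN V T

/-- The relation `G[p] x ⤳PEG X` for expressions with the *not* predicate. -/
inductive PEGMatchN {V T : Type} (P : V → PExpN V T) : PExpN V T → List T → Res T → Prop where
  | empty (x : List T) : PEGMatchN P .eps x (.str x)
  | termS (a : T) (x : List T) : PEGMatchN P (.term a) (a :: x) (.str x)
  | termF {b a : T} (x : List T) : b ≠ a → PEGMatchN P (.term b) (a :: x) .fail
  | termE (a : T) : PEGMatchN P (.term a) [] .fail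
  | var {A : V} {x : List T} {r : Res T} : PEGMatchN P (P A) x r → PEGMatchN P (.var A) x r
  | catS {p₁ p₂ : PExpN V T} {v u : List T} {r : Res T} :
      PEGMatchN P p₁ v (.str u) → PEGMatchN P p₂ u r → PEGMatchN P (.cat p₁ p₂) v r
  | catF {p₁ p₂ : PExpN V T} {v : List T} :
      PEGMatchN P p₁ v .fail → PEGMatchN P (.cat p₁ p₂) v .fail
  | ordS {p₁ p₂ : PExpN V T} {v w : List T} :
      PEGMatchN P p₁ v (.str w) → PEGMatchN P (.alt p₁ p₂) v (.str w)
  | ordB {p₁ p₂ : PExpN V T} {v w : List T} :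
      PEGMatchN P p₁ v .fail → PEGMatchN P p₂ v (.str w) → PEGMatchN P (.alt p₁ p₂) v (.str w)
  | ordF {p₁ p₂ : PExpN V T} {v : List T} :
      PEGMatchN P p₁ v .fail → PEGMatchN P p₂ v .fail → PEGMatchN P (.alt p₁ p₂) v .fail
  | notS {p : PExpN V T} {x : List T} :
      PEGMatchN P p x .fail → PEGMatchN P (.not p) x (.str x)
  | notF {p : PExpN V T} {v w : List T} :
      PEGMatchN P p v (.str w) → PEGMatchN P (.not p) v .fail

/-- Predicate erasure: the erasure of `(!p₁)p₂` is the erasure of `p₂`; a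
predicate occurring otherwise is replaced by `ε`; all other expressions
recursively erase predicates in their subexpressions. -/
def erase {V T : Type} : PExpN V T → PExp V T
  | .eps => .eps
  | .term a => .term a
  | .var A => .var A
  | .cat (.not _) p₂ => erase p₂
  | .cat (.eps) p₂ => .cat (erase .eps) (erase p₂)
  | .cat (.term a) p₂ => .cat (erase (.term a)) (erase p₂)
  | .cat (.var A) p₂ => .cat (erase (.var A)) (erase p₂)
  | .cat (.cat q₁ q₂) p₂ => .cat (erase (.cat q₁ q₂)) (erase p₂)
  | .cat (.alt q₁ q₂) p₂ => .cat (erase (.alt q₁ q₂)) (erase p₂)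
  | .alt p₁ p₂ => .alt (erase p₁) (erase p₂)
  | .not _ => .eps


theorem erase_aux {V T : Type} (P : V → PExpN V T) {p : PExpN V T} {v : List T} {r : Res T}
    (h : PEGMatchN P p v r) : ∀ w, r = .str w →
    CFGMatch (fun A => erase (P A)) (erase p) v w := by
  induction h with
  | empty x => rintro w ⟨rfl⟩; exact .empty _
  | termS a x => rintro w ⟨rfl⟩; exact .term a _
  | termF x h => rintro w hw; cases hw
  | termE a => rintro w hw; cases hw
  | var h ih => rintro w rfl; exact .var (ih w rfl)
  | @catS p₁ p₂ v u r h₁ h₂ ih₁ ih₂ =>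
    rintro w rfl
    cases p₁ with
    | not q =>
      cases h₁
      exact ih₂ w rfl
    | eps => exact .cat (ih₁ u rfl) (ih₂ w rfl)
    | term a => exact .cat (ih₁ u rfl) (ih₂ w rfl)
    | var A => exact .cat (ih₁ u rfl) (ih₂ w rfl)
    | cat q₁ q₂ => exact .cat (ih₁ u rfl) (ih₂ w rfl)
    | alt q₁ q₂ => exact .cat (ih₁ u rfl) (ih₂ w rfl)
  | catF h ih => rintro w hw; cases hw
  | ordS h ih => rintro w hw; exact .altL (ih w hw)
  | ordB h₁ h₂ ih₁ ih₂ => rintro w hw; exact .altR (ih₂ w hw)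
  | ordF h₁ h₂ ih₁ ih₂ => rintro w hw; cases hw
  | notS h ih => rintro w ⟨rfl⟩; exact .empty _
  | notF h ih => rintro w hw; cases hw

/-- erasing all predicates from a PEG yields a PE-CFG whose
language contains that of the PEG: if `G[p] xy ⤳PEG y` then
`G'[p'] xy ⤳CFG y` for the erased grammar `G'` and expression `p'`. -/
theorem stmt_12 {V T : Type} [Fintype V] [Fintype T]
    (P : V → PExpN V T) (p : PExpN V T) (x y : List T)
    (h : PEGMatchN P p (x ++ y) (.str y)) :
    CFGMatch (fun A => erase (P A)) (erase p) (x ++ y) y := by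
  exact erase_aux P h y rfl
end
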